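/- Let P, Q be integers with Q ≥ 0 and P^2 − 4Q > 0 (equivalently, Q ≥ 0 and either P > 2√Q or P < −2√Q). Then the Lucas sequence U = U(P,Q), extended to ℤ by zero on negative indices, is infinitely log-concave: for every i ≥ 1 and every n ∈ ℤ, (𝓛^i U) n ≥ 0. -/
import Mathlib


/-- The Lucas sequence of the first kind `U(P,Q)`. -/
def lucasU (P Q : ℤ) : ℕ → ℤ
  | 0 => 0
  | 1 => 1
  | n + 2 => P * lucasU P Q (n + 1) - Q * lucasU P Q n

/-- The Lucas sequence extended to `ℤ` by zero on negative indices, as a real sequence. -/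
def lucasUZ (P Q : ℤ) : ℤ → ℝ := fun n => if n < 0 then 0 else (lucasU P Q n.toNat : ℝ)

/-- The log-operator on sequences indexed by `ℤ`. -/
def logOp (a : ℤ → ℝ) : ℤ → ℝ := fun n => (a n) ^ 2 - a (n - 1) * a (n + 1)

lemma lucasU_catalan (P Q : ℤ) : ∀ n : ℕ,
    (lucasU P Q (n+1))^2 - lucasU P Q n * lucasU P Q (n+2) = Q ^ n := by
  intro n
  induction n with
  | zero => simp [lucasU]
  | succ k ih =>
    have h1 : lucasU P Q (k+2) = P * lucasU P Q (k+1) - Q * lucasU P Q k := rfl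
    have h3 : lucasU P Q (k+3) = P * lucasU P Q (k+2) - Q * lucasU P Q (k+1) := rfl
    show (lucasU P Q (k+2))^2 - lucasU P Q (k+1) * lucasU P Q (k+3) = Q ^ (k+1)
    rw [h3, h1]; rw [h1] at ih
    ring_nf; ring_nf at ih
    linear_combination Q * ih

/-- geometric tail sequence -/
def geomB (Q : ℤ) : ℤ → ℝ := fun n => if n < 1 then 0 else (Q : ℝ) ^ (n - 1).toNat

def delta1 : ℤ → ℝ := fun n => if n = 1 then 1 else 0

lemma logOp_lucasUZ (P Q : ℤ) : logOp (lucasUZ P Q) = geomB Q := by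
  funext n
  unfold logOp lucasUZ geomB
  rcases lt_trichotomy n 0 with h | h | h
  · have h1 : n - 1 < 0 := by omega
    simp [h, h1, show n < 1 by omega]
  · subst h
    norm_num [lucasU]
  · have h0 : ¬ n < 0 := by omega
    have h1 : ¬ n - 1 < 0 := by omega
    have h2 : ¬ n < 1 := by omega
    simp only [h0, h1, h2, if_false, show ¬ n + 1 < 0 by omega, if_false]
    obtain ⟨k, hk⟩ : ∃ k : ℕ, n = (k : ℤ) + 1 := ⟨(n-1).toNat, by omega⟩
    subst hk
    have e1 : ((k : ℤ) + 1).toNat = k + 1 := by omega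
    have e2 : ((k : ℤ) + 1 - 1).toNat = k := by omega
    have e3 : ((k : ℤ) + 1 + 1).toNat = k + 2 := by omega
    rw [e1, e2, e3]
    exact_mod_cast lucasU_catalan P Q k

lemma logOp_geomB (Q : ℤ) : logOp (geomB Q) = delta1 := by
  funext n
  unfold logOp geomB delta1
  rcases lt_trichotomy n 1 with h | h | h
  · have h1 : n - 1 < 1 := by omega
    simp [h, h1, show n ≠ 1 by omega]
  · subst h; norm_num
  · have h0 : ¬ n < 1 := by omega
    have h1 : ¬ n - 1 < 1 := by omega
    have h2 : ¬ n + 1 < 1 := by omega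
    simp only [h0, h1, h2, if_false, show n ≠ 1 by omega]
    have he : (n-1).toNat + (n-1).toNat = (n-1-1).toNat + (n+1-1).toNat := by omega
    rw [sq, ← pow_add, ← pow_add, he, sub_self]

lemma logOp_delta1 : logOp delta1 = delta1 := by
  funext n
  unfold logOp delta1
  rcases eq_or_ne n 1 with h | h
  · subst h; norm_num
  · simp only [h, if_false]
    rcases eq_or_ne (n - 1) 1 with h1 | h1
    · simp [h1, show n + 1 ≠ 1 by omega]
    · simp [h1]

theorem lucasU_pos_discriminant_inf_log_concave (P Q : ℤ) (hQ : 0 ≤ Q)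
    (hD : (0 : ℤ) < P ^ 2 - 4 * Q) :
    ∀ i : ℕ, 1 ≤ i → ∀ n : ℤ, 0 ≤ (logOp^[i] (lucasUZ P Q)) n := by
  have hB : ∀ n, 0 ≤ geomB Q n := by
    intro n
    unfold geomB
    split
    · exact le_refl 0
    · exact pow_nonneg (by exact_mod_cast hQ) _
  have hd : ∀ n, 0 ≤ delta1 n := by
    intro n; unfold delta1; split <;> norm_num
  have hfix : ∀ k : ℕ, logOp^[k] delta1 = delta1 := by
    intro k
    induction k with
    | zero => rfl
    | succ m ih => rw [Function.iterate_succ_apply, logOp_delta1, ih]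
  intro i hi n
  match i, hi with
  | 1, _ =>
    rw [Function.iterate_one, logOp_lucasUZ]
    exact hB n
  | (k+2), _ =>
    have h2 : logOp^[2] (lucasUZ P Q) = delta1 := by
      show logOp (logOp (lucasUZ P Q)) = delta1
      rw [logOp_lucasUZ, logOp_geomB]
    rw [Function.iterate_add_apply, h2, hfix]
    exact hd n
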